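/- arXiv:0812.4567 — 4 statements merged into one kernel-verified Lean document; each statement's English description precedes it below -/
import Mathlib

section
/- Let K ∈ ℂ^{N×N} be positive semidefinite and let Q be a matrix such that Q K Q* > 0 (strictly positive definite) and rank(Q K Q*) = rank(K). Define the pseudoinverse K^{[-1]} = Q* (Q K Q*)^{-1} Q. Then I − K K^{[-1]} = (I − K K^{[-1]}) P_{Ker K}, where P_{Ker K} is the orthogonal projection onto the kernel of K. -/
open Matrix ComplexOrder

/-- `P` is the orthogonal projection (as a matrix) onto the kernel of `K`. -/
def IsKerProj {N : ℕ} (K P : Matrix (Fin N) (Fin N) ℂ) : Prop :=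
  P.IsHermitian ∧ P * P = P ∧ K * P = 0 ∧
    ∀ v : Fin N → ℂ, K.mulVec v = 0 → P.mulVec v = v


lemma ext_of_mulVec {m n : ℕ} {A B : Matrix (Fin m) (Fin n) ℂ}
    (h : ∀ v, A *ᵥ v = B *ᵥ v) : A = B := by
  ext i j
  have := congrFun (h (Pi.single j 1)) i
  simpa [Matrix.mulVec_single_one] using this

lemma key (N r : ℕ) (K : Matrix (Fin N) (Fin N) ℂ) (Q : Matrix (Fin r) (Fin N) ℂ)
    (hK : K.PosSemidef) (hQ : (Q * K * Qᴴ).PosDef)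
    (hr : (Q * K * Qᴴ).rank = K.rank) :
    K * (Qᴴ * (Q * K * Qᴴ)⁻¹ * Q) * K = K := by
  obtain ⟨C, hCps, hCC⟩ : ∃ C : Matrix (Fin N) (Fin N) ℂ, C.PosSemidef ∧ C * C = K := by
    open scoped MatrixOrder Matrix.Norms.L2Operator in
    exact ⟨CFC.sqrt K, (CFC.sqrt_nonneg K).posSemidef, CFC.sqrt_mul_sqrt_self K hK.nonneg⟩
  have hCH : Cᴴ = C := hCps.isHermitian
  set M := C * Qᴴ with hMdef
  have hMH : Mᴴ = Q * C := by
    rw [hMdef, conjTranspose_mul, conjTranspose_conjTranspose, hCH]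
  have hMM : Mᴴ * M = Q * K * Qᴴ := by
    rw [hMH, hMdef, Matrix.mul_assoc, ← Matrix.mul_assoc C, hCC, Matrix.mul_assoc]
  have hdet : IsUnit (Q * K * Qᴴ).det := (Matrix.isUnit_iff_isUnit_det _).mp hQ.isUnit
  have hinv : (Q * K * Qᴴ)⁻¹ * (Q * K * Qᴴ) = 1 := Matrix.nonsing_inv_mul _ hdet
  set G := (Q * K * Qᴴ)⁻¹ with hGdef
  have hrM : M.rank = C.rank := by
    have h1 : (Mᴴ * M).rank = M.rank := Matrix.rank_conjTranspose_mul_self M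
    have h2 : (Cᴴ * C).rank = C.rank := Matrix.rank_conjTranspose_mul_self C
    rw [hMM] at h1
    rw [hCH, hCC] at h2
    rw [← h1, hr, ← h2]
  have hle : LinearMap.range M.mulVecLin ≤ LinearMap.range C.mulVecLin := by
    rw [hMdef, Matrix.mulVecLin_mul]
    exact LinearMap.range_comp_le_range _ _
  have hrange : LinearMap.range M.mulVecLin = LinearMap.range C.mulVecLin :=
    Submodule.eq_of_le_of_finrank_le hle (le_of_eq hrM.symm)
  have hMGM : M * G * Mᴴ * M = M := by
    rw [Matrix.mul_assoc (M * G), hMM, hGdef, Matrix.mul_assoc, hinv, Matrix.mul_one]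
  have hXC : M * G * Mᴴ * C = C := by
    apply ext_of_mulVec
    intro v
    have hmem : C *ᵥ v ∈ LinearMap.range M.mulVecLin := by
      rw [hrange]; exact ⟨v, rfl⟩
    obtain ⟨w, hw⟩ := hmem
    simp only [Matrix.mulVecLin_apply] at hw
    rw [← Matrix.mulVec_mulVec, ← hw, Matrix.mulVec_mulVec, hMGM]
  have hstep : K * (Qᴴ * G * Q) * K = C * (M * G * Mᴴ) * C := by
    rw [← hCC, hMdef, hMH]
    simp only [Matrix.mul_assoc]
  rw [hstep, Matrix.mul_assoc C, hXC, hCC]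

/-- Let `K ≥ 0` and let `Q` satisfy `Q K Qᴴ > 0` and `rank (Q K Qᴴ) = rank K`. For the
pseudoinverse `K⁻¹ = Qᴴ (Q K Qᴴ)⁻¹ Q` one has `I − K K⁻¹ = (I − K K⁻¹) P_{Ker K}`. -/
theorem one_sub_pseudoInv_eq (N r : ℕ)
    (K : Matrix (Fin N) (Fin N) ℂ) (Q : Matrix (Fin r) (Fin N) ℂ)
    (hK : K.PosSemidef) (hQ : (Q * K * Qᴴ).PosDef)
    (hr : (Q * K * Qᴴ).rank = K.rank)
    (P : Matrix (Fin N) (Fin N) ℂ) (hP : IsKerProj K P) :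
    (1 : Matrix (Fin N) (Fin N) ℂ) - K * (Qᴴ * (Q * K * Qᴴ)⁻¹ * Q) =
      ((1 : Matrix (Fin N) (Fin N) ℂ) - K * (Qᴴ * (Q * K * Qᴴ)⁻¹ * Q)) * P := by
  obtain ⟨hPH, hPP, hKP, hPv⟩ := hP
  have hkey := key N r K Q hK hQ hr
  set G := (Q * K * Qᴴ)⁻¹ with hGdef
  have hGH : Gᴴ = G := ((hQ.isHermitian).inv).eq ▸ rfl
  have hKH : Kᴴ = K := hK.isHermitian
  set B := (1 : Matrix (Fin N) (Fin N) ℂ) - Qᴴ * G * Q * K with hBdef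
  have hKB : K * B = 0 := by
    rw [hBdef, Matrix.mul_sub, Matrix.mul_one, sub_eq_zero]
    simp only [← Matrix.mul_assoc] at hkey ⊢
    exact hkey.symm
  have hPB : P * B = B := by
    apply ext_of_mulVec
    intro v
    have h0 : K *ᵥ (B *ᵥ v) = 0 := by
      rw [Matrix.mulVec_mulVec, hKB, Matrix.zero_mulVec]
    rw [← Matrix.mulVec_mulVec]
    exact hPv _ h0
  have hBH : Bᴴ = 1 - K * (Qᴴ * G * Q) := by
    rw [hBdef, conjTranspose_sub, conjTranspose_one, conjTranspose_mul,
      conjTranspose_mul, conjTranspose_mul, conjTranspose_conjTranspose,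
      hGH, hKH]
    simp only [Matrix.mul_assoc]
  calc (1 : Matrix (Fin N) (Fin N) ℂ) - K * (Qᴴ * G * Q)
      = Bᴴ := hBH.symm
    _ = (P * B)ᴴ := by rw [hPB]
    _ = Bᴴ * Pᴴ := conjTranspose_mul _ _
    _ = ((1 : Matrix (Fin N) (Fin N) ℂ) - K * (Qᴴ * G * Q)) * P := by rw [hBH, hPH.eq]
end

section
/- Let K_n = (s_{i+j})_{i,j=0}^n be a positive semidefinite Hankel block matrix with Hermitian blocks s_k ∈ ℂ^{m×m}. Suppose there exists a nondecreasing right-continuous ℂ^{m×m}-valued measure dσ on ℝ with ∫ λ^k dσ(λ) = s_k for k = 0,…,2n. Then every row vector f = (f_0,…,f_{n−1}) ∈ ℂ^{1×mn} in Ker K_{n−1} satisfies f · (s_{n+1},…,s_{2n})* = 0; equivalently P_{Ker K_{n−1}} (s_{n+1}; …; s_{2n}) = 0 (the column of blocks s_{n+1} through s_{2n}). -/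
open Matrix ComplexOrder MeasureTheory

private lemma sum_swap4 {ι κ α β M : Type*} [Fintype ι] [Fintype κ] [Fintype α] [Fintype β]
    [AddCommMonoid M] (g : ι → α → κ → β → M) :
    ∑ i : ι, ∑ a : α, ∑ j : κ, ∑ b : β, g i a j b
      = ∑ a : α, ∑ b : β, ∑ i : ι, ∑ j : κ, g i a j b :=
  calc ∑ i : ι, ∑ a : α, ∑ j : κ, ∑ b : β, g i a j b
      = ∑ a : α, ∑ i : ι, ∑ j : κ, ∑ b : β, g i a j b := Finset.sum_comm
    _ = ∑ a : α, ∑ i : ι, ∑ b : β, ∑ j : κ, g i a j b :=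
        Finset.sum_congr rfl fun a _ => Finset.sum_congr rfl fun i _ => Finset.sum_comm
    _ = ∑ a : α, ∑ b : β, ∑ i : ι, ∑ j : κ, g i a j b :=
        Finset.sum_congr rfl fun a _ => Finset.sum_comm

/-- Let `K_n = (s_{i+j})_{i,j=0}^n ≥ 0` be a Hankel block matrix with Hermitian blocks
`s_k ∈ ℂ^{m×m}`, and suppose there is a positive `ℂ^{m×m}`-valued measure (represented by
a positive measure `μ` with pointwise positive semidefinite matrix density `W`) whose
moments of order `k = 0,…,2n` equal `s_k`. Then every row vector
`f ∈ Ker K_{n−1}` satisfies `f ⬝ (s_{n+1}; …; s_{2n}) = 0`, i.e.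
`P_{Ker K_{n−1}} (s_{n+1}; …; s_{2n}) = 0`. -/
theorem kerProj_moment_column_eq_zero (m n : ℕ)
    (s : ℕ → Matrix (Fin m) (Fin m) ℂ)
    (hherm : ∀ k, (s k).IsHermitian)
    (hPSD : (Matrix.of fun p q : Fin (n + 1) × Fin m =>
      s ((p.1 : ℕ) + (q.1 : ℕ)) p.2 q.2).PosSemidef)
    (μ : Measure ℝ) (W : ℝ → Matrix (Fin m) (Fin m) ℂ)
    (hW : ∀ x : ℝ, (W x).PosSemidef)
    (hint : ∀ k ≤ 2 * n, ∀ a b : Fin m,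
      Integrable (fun x : ℝ => (x : ℂ) ^ k * W x a b) μ)
    (hmom : ∀ k ≤ 2 * n, ∀ a b : Fin m,
      (∫ x : ℝ, (x : ℂ) ^ k * W x a b ∂μ) = s k a b)
    (f : Fin n × Fin m → ℂ)
    (hf : Matrix.vecMul f (Matrix.of fun p q : Fin n × Fin m =>
      s ((p.1 : ℕ) + (q.1 : ℕ)) p.2 q.2) = 0) :
    Matrix.vecMul f (Matrix.of fun (p : Fin n × Fin m) (b : Fin m) =>
      s (n + 1 + (p.1 : ℕ)) p.2 b) = 0 := by
  classical
  set u : ℝ → Fin m → ℂ := fun x a => ∑ j : Fin n, star (f (j, a)) * (x : ℂ) ^ (j : ℕ) with hu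
  have hstaru : ∀ (x : ℝ) (a : Fin m),
      star (u x a) = ∑ i : Fin n, f (i, a) * (x : ℂ) ^ (i : ℕ) := by
    intro x a
    simp [hu, star_sum, star_mul', ← Complex.ofReal_pow]
  set Q : ℝ → ℂ := fun x => star (u x) ⬝ᵥ (W x *ᵥ u x) with hQ
  have hQ_expand : ∀ x : ℝ, Q x = ∑ p : Fin n × Fin m, ∑ q : Fin n × Fin m,
      f p * star (f q) * ((x : ℂ) ^ ((p.1 : ℕ) + (q.1 : ℕ)) * W x p.2 q.2) := by
    intro x
    have h1 : Q x = ∑ a : Fin m, ∑ b : Fin m, ∑ i : Fin n, ∑ j : Fin n,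
        f (i, a) * star (f (j, b)) * ((x : ℂ) ^ ((i : ℕ) + (j : ℕ)) * W x a b) := by
      simp only [hQ, dotProduct, mulVec, Pi.star_apply]
      refine Finset.sum_congr rfl fun a _ => ?_
      rw [Finset.mul_sum]
      refine Finset.sum_congr rfl fun b _ => ?_
      rw [hstaru, Finset.sum_mul]
      refine Finset.sum_congr rfl fun i _ => ?_
      simp only [hu]
      rw [Finset.mul_sum, Finset.mul_sum]
      refine Finset.sum_congr rfl fun j _ => ?_
      rw [pow_add]; ring
    have h2 : (∑ p : Fin n × Fin m, ∑ q : Fin n × Fin m,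
        f p * star (f q) * ((x : ℂ) ^ ((p.1 : ℕ) + (q.1 : ℕ)) * W x p.2 q.2))
        = ∑ i : Fin n, ∑ a : Fin m, ∑ j : Fin n, ∑ b : Fin m,
        f (i, a) * star (f (j, b)) * ((x : ℂ) ^ ((i : ℕ) + (j : ℕ)) * W x a b) := by
      rw [Fintype.sum_prod_type]
      refine Finset.sum_congr rfl fun i _ => Finset.sum_congr rfl fun a _ => ?_
      rw [Fintype.sum_prod_type]
    rw [h1, h2]
    exact (sum_swap4 _).symm
  have hle : ∀ (p q : Fin n), (p : ℕ) + (q : ℕ) ≤ 2 * n := by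
    intro p q; have := p.isLt; have := q.isLt; omega
  have hterm_int : ∀ p q : Fin n × Fin m,
      Integrable (fun x : ℝ => f p * star (f q) *
        ((x : ℂ) ^ ((p.1 : ℕ) + (q.1 : ℕ)) * W x p.2 q.2)) μ := by
    intro p q
    exact Integrable.const_mul (hint ((p.1 : ℕ) + (q.1 : ℕ)) (hle p.1 q.1) p.2 q.2)
      (f p * star (f q))
  have hQ_int : Integrable Q μ := by
    have : Integrable (fun x : ℝ => ∑ p : Fin n × Fin m, ∑ q : Fin n × Fin m,
        f p * star (f q) * ((x : ℂ) ^ ((p.1 : ℕ) + (q.1 : ℕ)) * W x p.2 q.2)) μ :=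
      integrable_finset_sum _ fun p _ => integrable_finset_sum _ fun q _ => hterm_int p q
    exact this.congr (Filter.Eventually.of_forall fun x => (hQ_expand x).symm)
  have hQ_integral : (∫ x, Q x ∂μ) = 0 := by
    calc (∫ x, Q x ∂μ) = ∫ x, ∑ p : Fin n × Fin m, ∑ q : Fin n × Fin m,
        f p * star (f q) * ((x : ℂ) ^ ((p.1 : ℕ) + (q.1 : ℕ)) * W x p.2 q.2) ∂μ :=
          integral_congr_ae (Filter.Eventually.of_forall hQ_expand)
      _ = ∑ p : Fin n × Fin m, ∑ q : Fin n × Fin m,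
          f p * star (f q) * s ((p.1 : ℕ) + (q.1 : ℕ)) p.2 q.2 := by
          rw [integral_finset_sum _ fun p _ => integrable_finset_sum _ fun q _ => hterm_int p q]
          refine Finset.sum_congr rfl fun p _ => ?_
          rw [integral_finset_sum _ fun q _ => hterm_int p q]
          refine Finset.sum_congr rfl fun q _ => ?_
          rw [integral_const_mul, hmom _ (hle p.1 q.1)]
      _ = ∑ q : Fin n × Fin m, (Matrix.vecMul f (Matrix.of fun p q : Fin n × Fin m =>
            s ((p.1 : ℕ) + (q.1 : ℕ)) p.2 q.2)) q * star (f q) := by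
          rw [Finset.sum_comm]
          refine Finset.sum_congr rfl fun q _ => ?_
          simp only [Matrix.vecMul, dotProduct, Matrix.of_apply, Finset.sum_mul]
          exact Finset.sum_congr rfl fun p _ => by ring
      _ = 0 := by rw [hf]; simp
  have hQ_nonneg : ∀ x : ℝ, 0 ≤ Q x := fun x => (hW x).dotProduct_mulVec_nonneg (u x)
  have hQ_re : ∀ x : ℝ, Q x = ((Q x).re : ℂ) := by
    intro x
    have h := hQ_nonneg x
    rw [Complex.le_def] at h
    exact (Complex.ext (by simp) (by simpa using h.2.symm))
  have hre_int : Integrable (fun x => (Q x).re) μ := hQ_int.re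
  have hre_zero : (∫ x, (Q x).re ∂μ) = 0 := by
    have := integral_re hQ_int
    simp only [RCLike.re_to_complex] at this ⊢
    rw [this, hQ_integral, Complex.zero_re]
  have hre_nonneg : 0 ≤ᵐ[μ] fun x => (Q x).re := by
    refine Filter.Eventually.of_forall fun x => ?_
    have h := hQ_nonneg x
    rw [Complex.le_def] at h
    simpa using h.1
  have hae0 : (fun x => (Q x).re) =ᵐ[μ] 0 :=
    (integral_eq_zero_iff_of_nonneg_ae hre_nonneg hre_int).mp hre_zero
  have hWu : ∀ᵐ x ∂μ, W x *ᵥ u x = 0 := by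
    filter_upwards [hae0] with x hx
    have hQx : Q x = 0 := by rw [hQ_re x, hx]; simp
    exact ((hW x).dotProduct_mulVec_zero_iff (u x)).mp hQx
  funext b
  have hle2 : ∀ i : Fin n, n + 1 + (i : ℕ) ≤ 2 * n := by
    intro i; have := i.isLt; omega
  have hGint : ∀ p : Fin n × Fin m,
      Integrable (fun x : ℝ => f p * ((x : ℂ) ^ (n + 1 + (p.1 : ℕ)) * W x p.2 b)) μ :=
    fun p => Integrable.const_mul (hint (n + 1 + (p.1 : ℕ)) (hle2 p.1) p.2 b) (f p)
  show (Matrix.vecMul f _) b = 0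
  calc (Matrix.vecMul f (Matrix.of fun (p : Fin n × Fin m) (b : Fin m) =>
        s (n + 1 + (p.1 : ℕ)) p.2 b)) b
      = ∑ p : Fin n × Fin m, f p * s (n + 1 + (p.1 : ℕ)) p.2 b := by
        simp [Matrix.vecMul, dotProduct]
    _ = ∑ p : Fin n × Fin m, f p * ∫ x, (x : ℂ) ^ (n + 1 + (p.1 : ℕ)) * W x p.2 b ∂μ :=
        Finset.sum_congr rfl fun p _ => by rw [hmom _ (hle2 p.1)]
    _ = ∫ x, ∑ p : Fin n × Fin m, f p * ((x : ℂ) ^ (n + 1 + (p.1 : ℕ)) * W x p.2 b) ∂μ := by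
        rw [integral_finset_sum _ fun p _ => hGint p]
        exact Finset.sum_congr rfl fun p _ => (integral_const_mul _ _).symm
    _ = 0 := by
        rw [← integral_zero ℝ ℂ (μ := μ)]
        refine integral_congr_ae ?_
        filter_upwards [hWu] with x hx
        have h1 : ∑ a : Fin m, star (u x a) * W x a b = 0 := by
          have h2 : star ((W x *ᵥ u x) b) = 0 := by rw [hx]; simp
          calc ∑ a : Fin m, star (u x a) * W x a b
              = star (∑ a : Fin m, W x b a * u x a) := by
                rw [star_sum]
                refine Finset.sum_congr rfl fun a _ => ?_
                rw [star_mul', (hW x).1.apply a b, mul_comm]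
            _ = 0 := h2
        calc ∑ p : Fin n × Fin m, f p * ((x : ℂ) ^ (n + 1 + (p.1 : ℕ)) * W x p.2 b)
            = (x : ℂ) ^ (n + 1) * ∑ a : Fin m, star (u x a) * W x a b := by
              rw [Finset.mul_sum, Fintype.sum_prod_type, Finset.sum_comm]
              refine Finset.sum_congr rfl fun a _ => ?_
              rw [hstaru, Finset.sum_mul, Finset.mul_sum]
              refine Finset.sum_congr rfl fun i _ => ?_
              simp only [pow_add]; ring
          _ = 0 := by rw [h1, mul_zero]
end

section
/- Let K ∈ ℂ^{N×N} be positive semidefinite, and suppose Q ∈ ℂ^{r×N} and N' ∈ ℂ^{r×r} satisfy Q K Q* > 0, rank Q K Q* = rank K, and Q F = N' Q for some matrix F ∈ ℂ^{N×N}. Define K^{[-1]} = Q*(QKQ*)^{−1}Q. Then for every j ≥ 0, K^{[-1]} F^j (I − K K^{[-1]}) = 0, and consequently K^{[-1]} (I − zF)^{−1} (I − K K^{[-1]}) = 0 for every z ∈ ℂ such that I − zF is invertible. -/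
open Matrix ComplexOrder

/-- Let `K ≥ 0`, and suppose `Q`, `N'` satisfy `Q K Qᴴ > 0`, `rank (Q K Qᴴ) = rank K` and
`Q F = N' Q`. Then for the pseudoinverse `K⁻¹ = Qᴴ (Q K Qᴴ)⁻¹ Q` one has
`K⁻¹ F^j (I − K K⁻¹) = 0` for all `j ≥ 0`, and `K⁻¹ (I − zF)⁻¹ (I − K K⁻¹) = 0` for
every `z` such that `I − zF` is invertible. -/
theorem pseudoInv_shift_annihilates (N r : ℕ)
    (K F : Matrix (Fin N) (Fin N) ℂ) (Q : Matrix (Fin r) (Fin N) ℂ)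
    (N' : Matrix (Fin r) (Fin r) ℂ)
    (hK : K.PosSemidef) (hQ : (Q * K * Qᴴ).PosDef)
    (hr : (Q * K * Qᴴ).rank = K.rank)
    (hQF : Q * F = N' * Q) :
    (∀ j : ℕ, (Qᴴ * (Q * K * Qᴴ)⁻¹ * Q) * F ^ j *
        (1 - K * (Qᴴ * (Q * K * Qᴴ)⁻¹ * Q)) = 0) ∧
      ∀ z : ℂ, IsUnit (1 - z • F) →
        (Qᴴ * (Q * K * Qᴴ)⁻¹ * Q) * (1 - z • F)⁻¹ *
          (1 - K * (Qᴴ * (Q * K * Qᴴ)⁻¹ * Q)) = 0 := by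
  have hMdet : IsUnit (Q * K * Qᴴ).det := isUnit_iff_ne_zero.mpr hQ.det_pos.ne'
  have key : Q * K * Qᴴ * (Q * K * Qᴴ)⁻¹ = 1 := Matrix.mul_nonsing_inv _ hMdet
  -- the crucial annihilation identity
  have hQX : Q * (1 - K * (Qᴴ * (Q * K * Qᴴ)⁻¹ * Q)) = 0 := by
    have h1 : Q * (K * (Qᴴ * (Q * K * Qᴴ)⁻¹ * Q)) = Q * K * Qᴴ * (Q * K * Qᴴ)⁻¹ * Q := by
      simp only [← Matrix.mul_assoc]
    rw [Matrix.mul_sub, Matrix.mul_one, h1, key, Matrix.one_mul, sub_self]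
  have hQFj : ∀ j : ℕ, Q * F ^ j = N' ^ j * Q := by
    intro j
    induction j with
    | zero => simp
    | succ n ih =>
      rw [pow_succ, pow_succ, ← Matrix.mul_assoc, ih, Matrix.mul_assoc, hQF, ← Matrix.mul_assoc]
  constructor
  · intro j
    have h2 : (Qᴴ * (Q * K * Qᴴ)⁻¹ * Q) * F ^ j *
        (1 - K * (Qᴴ * (Q * K * Qᴴ)⁻¹ * Q)) =
        Qᴴ * (Q * K * Qᴴ)⁻¹ * (N' ^ j) * (Q * (1 - K * (Qᴴ * (Q * K * Qᴴ)⁻¹ * Q))) := by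
      rw [Matrix.mul_assoc (Qᴴ * (Q * K * Qᴴ)⁻¹) Q (F ^ j), hQFj j]
      simp only [Matrix.mul_assoc]
    rw [h2, hQX, Matrix.mul_zero]
  · intro z hz
    have hzdet : IsUnit (1 - z • F).det := (Matrix.isUnit_iff_isUnit_det _).mp hz
    have hcomm : (1 - z • N') * Q = Q * (1 - z • F) := by
      rw [Matrix.sub_mul, Matrix.mul_sub, Matrix.one_mul, Matrix.mul_one, Matrix.smul_mul, Matrix.mul_smul, hQF]
    have hAunit : IsUnit (1 - z • N') := by
      rw [← Matrix.vecMul_injective_iff_isUnit]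
      intro x y hxy
      have hxy' : x ᵥ* (1 - z • N') = y ᵥ* (1 - z • N') := hxy
      have hsub : (x - y) ᵥ* (1 - z • N') = 0 := by
        rw [Matrix.sub_vecMul, hxy', sub_self]
      rw [← sub_eq_zero]
      set v := x - y with hv
      have h1 : (v ᵥ* Q) ᵥ* (1 - z • F) = 0 := by
        rw [Matrix.vecMul_vecMul, ← hcomm, ← Matrix.vecMul_vecMul, hsub, Matrix.zero_vecMul]
      have h2 : v ᵥ* Q = 0 := by
        have h3 := congrArg (fun w => w ᵥ* (1 - z • F)⁻¹) h1
        simpa [Matrix.vecMul_vecMul, Matrix.mul_nonsing_inv _ hzdet, Matrix.mul_assoc] using h3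
      by_contra hvne
      have hsv : star v ≠ 0 := fun h => hvne (by simpa using congrArg star h)
      have hpos := hQ.dotProduct_mulVec_pos hsv
      have h4 : Qᴴ *ᵥ star v = 0 := by
        rw [← Matrix.star_vecMul, h2]; simp
      have hMv : (Q * K * Qᴴ) *ᵥ star v = 0 := by
        rw [← Matrix.mulVec_mulVec, h4, Matrix.mulVec_zero]
      rw [hMv] at hpos
      simp at hpos
    have hAdet : IsUnit (1 - z • N').det := (Matrix.isUnit_iff_isUnit_det _).mp hAunit
    have hQinv : Q * (1 - z • F)⁻¹ = (1 - z • N')⁻¹ * Q := by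
      calc Q * (1 - z • F)⁻¹
          = (1 - z • N')⁻¹ * ((1 - z • N') * Q) * (1 - z • F)⁻¹ := by
            rw [← Matrix.mul_assoc, Matrix.nonsing_inv_mul _ hAdet, Matrix.one_mul]
        _ = (1 - z • N')⁻¹ * Q * ((1 - z • F) * (1 - z • F)⁻¹) := by
            rw [hcomm]; simp only [Matrix.mul_assoc]
        _ = (1 - z • N')⁻¹ * Q := by rw [Matrix.mul_nonsing_inv _ hzdet, Matrix.mul_one]
    have h5 : (Qᴴ * (Q * K * Qᴴ)⁻¹ * Q) * (1 - z • F)⁻¹ *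
        (1 - K * (Qᴴ * (Q * K * Qᴴ)⁻¹ * Q)) =
        Qᴴ * (Q * K * Qᴴ)⁻¹ * (1 - z • N')⁻¹ * (Q * (1 - K * (Qᴴ * (Q * K * Qᴴ)⁻¹ * Q))) := by
      rw [Matrix.mul_assoc (Qᴴ * (Q * K * Qᴴ)⁻¹) Q ((1 - z • F)⁻¹), hQinv]
      simp only [Matrix.mul_assoc]
    rw [h5, hQX, Matrix.mul_zero]
end

section
/- Let R = (R_1, R_2) ∈ ℂ^{l×2m} satisfy R_1 R_2* − R_2 R_1* = 0 (i.e. R is J-neutral for J = [[0, iI_m],[−iI_m, 0]], meaning R J R* = 0). Then rank R = rank(R_1 + iR_2). -/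
open Matrix

open scoped ComplexOrder in
private lemma rank_mul_conjT_aux {l m : Type*} [Fintype l] [Fintype m] (A : Matrix l m ℂ) :
    (A * Aᴴ).rank = A.rank :=
  rank_self_mul_conjTranspose A

/-- If `R = (R₁, R₂) ∈ ℂ^{l×2m}` is `J`-neutral, i.e. `R₁ R₂ᴴ − R₂ R₁ᴴ = 0`, then
`rank R = rank (R₁ + i R₂)`. -/
theorem rank_of_J_neutral (l m : ℕ)
    (R₁ R₂ : Matrix (Fin l) (Fin m) ℂ)
    (hneutral : R₁ * R₂ᴴ - R₂ * R₁ᴴ = 0) :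
    (Matrix.of fun (i : Fin l) (j : Fin m ⊕ Fin m) =>
        Sum.elim (R₁ i) (R₂ i) j).rank = (R₁ + Complex.I • R₂).rank := by
  have hR : (Matrix.of fun (i : Fin l) (j : Fin m ⊕ Fin m) =>
      Sum.elim (R₁ i) (R₂ i) j) = fromCols R₁ R₂ := rfl
  rw [hR, ← rank_mul_conjT_aux (fromCols R₁ R₂),
    ← rank_mul_conjT_aux (R₁ + Complex.I • R₂)]
  congr 1
  rw [conjTranspose_fromCols_eq_fromRows_conjTranspose, fromCols_mul_fromRows]
  have h : R₁ * R₂ᴴ = R₂ * R₁ᴴ := sub_eq_zero.mp hneutral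
  simp only [conjTranspose_add, conjTranspose_smul, Complex.star_def, Complex.conj_I,
    Matrix.add_mul, Matrix.mul_add, Matrix.smul_mul, Matrix.mul_smul, neg_smul,
    Matrix.mul_neg, Matrix.neg_mul, smul_neg, smul_add, neg_one_smul, neg_add,
    smul_smul, Complex.I_mul_I, neg_neg, one_smul, h]
  abel
end
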